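/- Let (Q, μ) be a measure space and let T be a symmetric linear operator on L²(Q, μ; ℂ), i.e. a linear map defined on a subspace D of L²(Q, μ; ℂ) such that ⟪T x, y⟫ = ⟪x, T y⟫ for all x, y ∈ D. Suppose Φ₀ ∈ D is not the zero element, Φ₀ is almost everywhere real-valued and nonnegative, and T Φ₀ = e₀ · Φ₀ for some real number e₀. Then for every φ ∈ D whose real part is strictly positive almost everywhere, and for all real numbers a, b such that a · Re(φ(q)) ≤ Re((T φ)(q)) ≤ b · Re(φ(q)) for μ-almost every q ∈ Q, one has a ≤ e₀ ≤ b. -/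

import Mathlib

open MeasureTheory
open scoped ComplexInnerProductSpace

/-- If a symmetric operator `T` defined on a subspace `D` of
`L²(Q, μ; ℂ)` has a nonzero eigenvector `Φ₀` which is a.e. real-valued and
nonnegative, with real eigenvalue `e₀`, then for every `φ ∈ D` whose real part
is a.e. strictly positive and every `a b : ℝ` with
`a · Re φ ≤ Re (T φ) ≤ b · Re φ` a.e., one has `a ≤ e₀ ≤ b`. -/
theorem eigenvalue_bounds_of_nonneg_eigenvector
    {Q : Type*} [MeasurableSpace Q] (μ : Measure Q)
    (D : Submodule ℂ (Lp ℂ 2 μ)) (T : D →ₗ[ℂ] Lp ℂ 2 μ)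
    (hsym : ∀ x y : D, ⟪T x, (y : Lp ℂ 2 μ)⟫ = ⟪(x : Lp ℂ 2 μ), T y⟫)
    (Φ₀ : D) (hΦ₀ne : (Φ₀ : Lp ℂ 2 μ) ≠ 0)
    (hΦ₀real : ∀ᵐ q ∂μ, (((Φ₀ : Lp ℂ 2 μ) : Q → ℂ) q).im = 0)
    (hΦ₀nonneg : ∀ᵐ q ∂μ, 0 ≤ (((Φ₀ : Lp ℂ 2 μ) : Q → ℂ) q).re)
    (e₀ : ℝ) (heig : T Φ₀ = (e₀ : ℂ) • (Φ₀ : Lp ℂ 2 μ))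
    (φ : D) (hφpos : ∀ᵐ q ∂μ, 0 < (((φ : Lp ℂ 2 μ) : Q → ℂ) q).re)
    (a b : ℝ)
    (hab : ∀ᵐ q ∂μ,
      a * (((φ : Lp ℂ 2 μ) : Q → ℂ) q).re ≤ ((T φ : Q → ℂ) q).re ∧
      ((T φ : Q → ℂ) q).re ≤ b * (((φ : Lp ℂ 2 μ) : Q → ℂ) q).re) :
    a ≤ e₀ ∧ e₀ ≤ b := by
  set f := (Φ₀ : Lp ℂ 2 μ) with hfdef
  set g := (φ : Lp ℂ 2 μ) with hgdef
  set h := (T φ) with hhdef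
  have hint1 : Integrable (fun q => (inner ℂ (f q) (g q) : ℂ)) μ :=
    L2.integrable_inner f g
  have hint2 : Integrable (fun q => (inner ℂ (f q) (h q) : ℂ)) μ :=
    L2.integrable_inner f h
  have key : (e₀ : ℂ) * ⟪f, g⟫ = ⟪f, h⟫ := by
    have h1 := hsym Φ₀ φ
    rw [heig, inner_smul_left, Complex.conj_ofReal] at h1
    exact h1
  have hre1 : (⟪f, g⟫ : ℂ).re = ∫ q, (f q).re * (g q).re ∂μ := by
    have hi := integral_re hint1
    simp only [RCLike.re_to_complex] at hi
    rw [L2.inner_def, ← hi]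
    refine integral_congr_ae ?_
    filter_upwards [hΦ₀real] with q hq
    simp [RCLike.inner_apply, Complex.mul_re, hq, mul_comm]
  have hre2 : (⟪f, h⟫ : ℂ).re = ∫ q, (f q).re * (h q).re ∂μ := by
    have hi := integral_re hint2
    simp only [RCLike.re_to_complex] at hi
    rw [L2.inner_def, ← hi]
    refine integral_congr_ae ?_
    filter_upwards [hΦ₀real] with q hq
    simp [RCLike.inner_apply, Complex.mul_re, hq, mul_comm]
  have hkeyre : e₀ * ∫ q, (f q).re * (g q).re ∂μ = ∫ q, (f q).re * (h q).re ∂μ := by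
    have := congrArg Complex.re key
    rwa [Complex.re_ofReal_mul, hre1, hre2] at this
  have hint1' : Integrable (fun q => (f q).re * (g q).re) μ := by
    refine hint1.re.congr ?_
    filter_upwards [hΦ₀real] with q hq
    simp [RCLike.inner_apply, Complex.mul_re, hq, mul_comm]
  have hint2' : Integrable (fun q => (f q).re * (h q).re) μ := by
    refine hint2.re.congr ?_
    filter_upwards [hΦ₀real] with q hq
    simp [RCLike.inner_apply, Complex.mul_re, hq, mul_comm]
  have hnn : 0 ≤ᵐ[μ] fun q => (f q).re * (g q).re := by
    filter_upwards [hΦ₀nonneg, hφpos] with q h1 h2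
    exact mul_nonneg h1 h2.le
  have hne : ¬ (∀ᵐ q ∂μ, (f q).re = 0) := by
    intro hcontra
    apply hΦ₀ne
    rw [hfdef] at *
    have hz : (Φ₀ : Lp ℂ 2 μ) =ᵐ[μ] 0 := by
      filter_upwards [hcontra, hΦ₀real] with q h1 h2
      exact Complex.ext (by simpa using h1) (by simpa using h2)
    exact Lp.eq_zero_iff_ae_eq_zero.mpr hz
  have hI1pos : 0 < ∫ q, (f q).re * (g q).re ∂μ := by
    rw [integral_pos_iff_support_of_nonneg_ae hnn hint1']
    by_contra hle
    push_neg at hle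
    have h0 : μ (Function.support fun q => (f q).re * (g q).re) = 0 := le_antisymm hle (zero_le)
    apply hne
    have : ∀ᵐ q ∂μ, (f q).re * (g q).re = 0 := by
      rw [ae_iff]
      simpa [Function.support] using h0
    filter_upwards [this, hφpos] with q h1 h2
    rcases mul_eq_zero.mp h1 with h | h
    · exact h
    · exact absurd h h2.ne'
  have hA : a * ∫ q, (f q).re * (g q).re ∂μ ≤ ∫ q, (f q).re * (h q).re ∂μ := by
    rw [← integral_const_mul]
    refine integral_mono_ae (hint1'.const_mul a) hint2' ?_
    filter_upwards [hΦ₀nonneg, hab] with q h1 h2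
    calc a * ((f q).re * (g q).re) = (f q).re * (a * (g q).re) := by ring
      _ ≤ (f q).re * (h q).re := mul_le_mul_of_nonneg_left h2.1 h1
  have hB : ∫ q, (f q).re * (h q).re ∂μ ≤ b * ∫ q, (f q).re * (g q).re ∂μ := by
    rw [← integral_const_mul]
    refine integral_mono_ae hint2' (hint1'.const_mul b) ?_
    filter_upwards [hΦ₀nonneg, hab] with q h1 h2
    calc (f q).re * (h q).re ≤ (f q).re * (b * (g q).re) := mul_le_mul_of_nonneg_left h2.2 h1
      _ = b * ((f q).re * (g q).re) := by ring
  constructor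
  · nlinarith [hA, hkeyre, hI1pos]
  · nlinarith [hB, hkeyre, hI1pos]
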